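/- Let V be a finite-dimensional vector space over a field of characteristic zero and let N₁, …, N_l be commuting nilpotent endomorphisms of V. Suppose that for every choice of positive reals c₁, …, c_l, the monodromy weight filtration of Σ cᵢNᵢ equals a fixed filtration W (which holds by the Cattani–Kaplan theorem when the Nᵢ arise from a nilpotent orbit). Then each Nⱼ satisfies Nⱼ(W_k) ⊆ W_{k-2} for all k. -/

import Mathlib

/-- `W` is the monodromy weight filtration (centered at 0) of the nilpotent endomorphism
`N`: a finite increasing filtration with `N (W k) ⊆ W (k-2)` such that `N^k` induces an
isomorphism `gr^W_k V ≅ gr^W_{-k} V` for `k ≥ 0` (encoded by surjectivity and injectivity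
conditions on submodules). -/
def IsMonodromyWeightFiltration {R V : Type*} [CommRing R] [AddCommGroup V] [Module R V]
    (N : Module.End R V) (W : ℤ → Submodule R V) : Prop :=
  Monotone W ∧ (∃ a, W a = ⊥) ∧ (∃ b, W b = ⊤) ∧
  (∀ k : ℤ, Submodule.map N (W k) ≤ W (k - 2)) ∧
  (∀ k : ℕ,
    W (-(k : ℤ)) ≤ Submodule.map (N ^ k : Module.End R V) (W (k : ℤ)) ⊔ W (-(k : ℤ) - 1) ∧
    W (k : ℤ) ⊓ Submodule.comap (N ^ k : Module.End R V) (W (-(k : ℤ) - 1)) ≤ W ((k : ℤ) - 1))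

/-- Let `N₁, …, N_l` be commuting nilpotent endomorphisms of a finite-dimensional real
vector space `V`, and let `W` be a fixed finite increasing filtration which is the
monodromy weight filtration of `Σ cᵢ Nᵢ` for every choice of positive reals `cᵢ`
(Cattani–Kaplan). Then each `Nⱼ` satisfies `Nⱼ (W k) ⊆ W (k - 2)` for all `k`. -/
theorem stmt9 {V : Type*} [AddCommGroup V] [Module ℝ V] [FiniteDimensional ℝ V]
    {l : ℕ} (N : Fin l → Module.End ℝ V)
    (hcomm : ∀ i j, Commute (N i) (N j)) (hnil : ∀ i, IsNilpotent (N i))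
    (W : ℤ → Submodule ℝ V)
    (hW : ∀ c : Fin l → ℝ, (∀ i, 0 < c i) →
      IsMonodromyWeightFiltration (∑ i, c i • N i) W) :
    ∀ (j : Fin l) (k : ℤ), Submodule.map (N j) (W k) ≤ W (k - 2) := by
  intro j k
  have h1 := (hW (fun i => if i = j then 2 else 1) (by intro i; split <;> norm_num)).2.2.2.1 k
  have h2 := (hW (fun _ => 1) (fun _ => one_pos)).2.2.2.1 k
  rintro _ ⟨v, hv, rfl⟩
  have e1 : (∑ i, (if i = j then (2:ℝ) else 1) • N i) v ∈ W (k - 2) :=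
    h1 ⟨v, hv, rfl⟩
  have e2 : (∑ i, (1:ℝ) • N i) v ∈ W (k - 2) := h2 ⟨v, hv, rfl⟩
  have key : N j v = (∑ i, (if i = j then (2:ℝ) else 1) • N i) v - (∑ i, (1:ℝ) • N i) v := by
    rw [← LinearMap.sub_apply, ← Finset.sum_sub_distrib]
    have : ∀ i ∈ Finset.univ, ((if i = j then (2:ℝ) else 1) • N i - (1:ℝ) • N i) =
        if i = j then N j else 0 := by
      intro i _
      split
      · subst i; rw [one_smul, two_smul]; abel
      · simp
    rw [Finset.sum_congr rfl this, Finset.sum_ite_eq' Finset.univ j]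
    simp
  rw [key]
  exact sub_mem e1 e2
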